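/- (Existence part of Corollary 1.) If the set of UEs M is finite and the set of SNs P is nonempty, then a two-sided pairwise stable matching η : M → P exists; in particular, any global maximizer of the social welfare Γ over the finite set of matchings is two-sided pairwise stable. -/

import Mathlib

open Finset

/-- The swap matching `η^{m ↔ m'}`: `m` and `m'` exchange serving nodes,
all other UEs keep their serving node. -/
def swapMatch {M P : Type*} [DecidableEq M] (η : M → P) (m m' : M) : M → P :=
  fun z => if z = m then η m' else if z = m' then η m else η z

/-- Utility of UE `x` under matching `η`: sum of pairwise utilities with the
UEs assigned to the same serving node. -/
def ueUtil {M P : Type*} [Fintype M] [DecidableEq P]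
    (u : M → M → ℝ) (η : M → P) (x : M) : ℝ :=
  ∑ z ∈ Finset.univ.filter (fun z => η z = η x), u z x

/-- Utility of SN `p` under matching `η`: sum of utilities of its associated UEs. -/
def snUtil {M P : Type*} [Fintype M] [DecidableEq P]
    (u : M → M → ℝ) (η : M → P) (p : P) : ℝ :=
  ∑ x ∈ Finset.univ.filter (fun x => η x = p), ueUtil u η x

/-- Social welfare: sum of utilities of all UEs. -/
def welfare {M P : Type*} [Fintype M] [DecidableEq P]
    (u : M → M → ℝ) (η : M → P) : ℝ :=
  ∑ x : M, ueUtil u η x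

/-- Two-sided pairwise stability: no pair of distinct UEs can swap so that all
four involved players weakly improve, with at least one strict improvement. -/
def TwoSidedStable {M P : Type*} [Fintype M] [DecidableEq M] [DecidableEq P]
    (u : M → M → ℝ) (η : M → P) : Prop :=
  ¬ ∃ m m' : M, m ≠ m' ∧
    ueUtil u (swapMatch η m m') m ≥ ueUtil u η m ∧
    ueUtil u (swapMatch η m m') m' ≥ ueUtil u η m' ∧
    snUtil u (swapMatch η m m') (η m) ≥ snUtil u η (η m) ∧
    snUtil u (swapMatch η m m') (η m') ≥ snUtil u η (η m') ∧
    (ueUtil u (swapMatch η m m') m > ueUtil u η m ∨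
     ueUtil u (swapMatch η m m') m' > ueUtil u η m' ∨
     snUtil u (swapMatch η m m') (η m) > snUtil u η (η m) ∨
     snUtil u (swapMatch η m m') (η m') > snUtil u η (η m'))

set_option linter.unusedSectionVars false

section Helpers
variable {M P : Type*} [Fintype M] [DecidableEq M] [DecidableEq P]

/-- Double sum of pairwise utilities over a cluster. -/
def S2 (u : M → M → ℝ) (C : Finset M) : ℝ := ∑ x ∈ C, ∑ z ∈ C, u z x

lemma S2_insert (u : M → M → ℝ) (hsymm : ∀ z y, u z y = u y z) (hdiag : ∀ z, u z z = 0)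
    {a : M} {C : Finset M} (ha : a ∉ C) :
    S2 u (insert a C) = S2 u C + 2 * ∑ z ∈ C, u z a := by
  unfold S2
  rw [Finset.sum_insert ha, Finset.sum_insert ha, hdiag]
  have h1 : ∀ x ∈ C, ∑ z ∈ insert a C, u z x = u a x + ∑ z ∈ C, u z x := by
    intro x hx; rw [Finset.sum_insert ha]
  rw [Finset.sum_congr rfl h1, Finset.sum_add_distrib]
  have h2 : ∑ x ∈ C, u a x = ∑ z ∈ C, u z a :=
    Finset.sum_congr rfl (fun x _ => hsymm a x)
  rw [h2]; ring

lemma snUtil_eq_S2 (u : M → M → ℝ) (θ : M → P) (p : P) :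
    snUtil u θ p = S2 u (Finset.univ.filter (fun x => θ x = p)) := by
  unfold snUtil S2
  refine Finset.sum_congr rfl (fun x hx => ?_)
  simp only [Finset.mem_filter] at hx
  unfold ueUtil
  refine Finset.sum_congr ?_ (fun _ _ => rfl)
  ext z; simp [hx.2]

lemma ueUtil_eq (u : M → M → ℝ) (θ : M → P) (x : M) {p : P} (hx : θ x = p) :
    ueUtil u θ x = ∑ z ∈ Finset.univ.filter (fun z => θ z = p), u z x := by
  unfold ueUtil; rw [hx]

lemma swapMatch_comm (η : M → P) (m m' : M) :
    swapMatch η m m' = swapMatch η m' m := by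
  funext z
  unfold swapMatch
  by_cases h1 : z = m
  · by_cases h2 : z = m'
    · rw [if_pos h1, if_pos h2]
      exact congrArg η (h2.symm.trans h1)
    · rw [if_pos h1, if_neg h2, if_pos h1]
  · by_cases h2 : z = m'
    · rw [if_neg h1, if_pos h2, if_pos h2]
    · rw [if_neg h1, if_neg h2, if_neg h2, if_neg h1]

lemma swapMatch_fst (η : M → P) (m m' : M) : swapMatch η m m' m = η m' := by
  simp [swapMatch]

lemma swapMatch_snd (η : M → P) (m m' : M) (hne : m ≠ m') :
    swapMatch η m m' m' = η m := by
  simp [swapMatch, hne.symm]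

lemma swapMatch_other (η : M → P) (m m' : M) {z : M} (h1 : z ≠ m) (h2 : z ≠ m') :
    swapMatch η m m' z = η z := by
  simp [swapMatch, h1, h2]

/-- The cluster of `η m'` after the swap: `m'` is replaced by `m`. -/
lemma swap_cluster (η : M → P) (m m' : M) (hne : m ≠ m') (hpq : η m ≠ η m') :
    Finset.univ.filter (fun x => swapMatch η m m' x = η m') =
      insert m ((Finset.univ.filter (fun x => η x = η m')).erase m') := by
  ext x
  simp only [Finset.mem_filter, Finset.mem_insert, Finset.mem_erase, Finset.mem_univ,
    true_and]
  by_cases h1 : x = m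
  · simp [h1, swapMatch_fst]
  · by_cases h2 : x = m'
    · rw [h2, swapMatch_snd η m m' hne]
      simp [hpq, h2, hne.symm]
    · rw [swapMatch_other η m m' h1 h2]
      simp [h1, h2]

/-- Key identity: change of the SN utility of `η m'` under the swap. -/
lemma snUtil_swap (u : M → M → ℝ) (hsymm : ∀ z y, u z y = u y z) (hdiag : ∀ z, u z z = 0)
    (η : M → P) (m m' : M) (hne : m ≠ m') (hpq : η m ≠ η m') :
    snUtil u (swapMatch η m m') (η m') =
      snUtil u η (η m') + 2 * (ueUtil u (swapMatch η m m') m - ueUtil u η m') := by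
  set η' := swapMatch η m m' with hη'
  set C : Finset M := (Finset.univ.filter (fun x => η x = η m')).erase m' with hC
  have hm'B : m' ∈ Finset.univ.filter (fun x => η x = η m') := by simp
  have hm'e : m' ∉ C := Finset.notMem_erase _ _
  have hme : m ∉ C := by
    intro h
    have := Finset.mem_of_mem_erase (hC ▸ h)
    simp [hpq] at this
  have hBC : Finset.univ.filter (fun x => η x = η m') = insert m' C :=
    (Finset.insert_erase hm'B).symm
  have hB' : Finset.univ.filter (fun x => η' x = η m') = insert m C :=
    swap_cluster η m m' hne hpq
  have hfm : ueUtil u η' m = ∑ z ∈ C, u z m := by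
    rw [ueUtil_eq u η' m (swapMatch_fst η m m'), hB', Finset.sum_insert hme, hdiag, zero_add]
  have hfm' : ueUtil u η m' = ∑ z ∈ C, u z m' := by
    rw [ueUtil_eq u η m' rfl, hBC, Finset.sum_insert hm'e, hdiag, zero_add]
  rw [snUtil_eq_S2, snUtil_eq_S2, hB', hBC,
    S2_insert u hsymm hdiag hme, S2_insert u hsymm hdiag hm'e, hfm, hfm']
  ring

lemma ueUtil_swap_other (u : M → M → ℝ) (η : M → P) (m m' : M) {x : M}
    (hx1 : η x ≠ η m) (hx2 : η x ≠ η m') :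
    ueUtil u (swapMatch η m m') x = ueUtil u η x := by
  have hxm : x ≠ m := fun h => hx1 (by rw [h])
  have hxm' : x ≠ m' := fun h => hx2 (by rw [h])
  unfold ueUtil
  rw [swapMatch_other η m m' hxm hxm']
  refine Finset.sum_congr ?_ (fun _ _ => rfl)
  ext z
  simp only [Finset.mem_filter, Finset.mem_univ, true_and]
  by_cases h1 : z = m
  · rw [h1, swapMatch_fst]
    exact ⟨fun h => absurd h.symm hx2, fun h => absurd h.symm hx1⟩
  · by_cases h2 : z = m'
    · rw [h2]
      unfold swapMatch
      by_cases hm : m' = m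
      · rw [if_pos hm, hm]
      · rw [if_neg hm, if_pos rfl]
        exact ⟨fun h => absurd h.symm hx1, fun h => absurd h.symm hx2⟩
    · rw [swapMatch_other η m m' h1 h2]

lemma welfare_split (u : M → M → ℝ) (θ : M → P) (p q : P) (hpq : p ≠ q) :
    welfare u θ = snUtil u θ p + snUtil u θ q +
      ∑ x ∈ Finset.univ.filter (fun x => ¬θ x = p ∧ ¬θ x = q), ueUtil u θ x := by
  unfold welfare snUtil
  rw [← Finset.sum_filter_add_sum_filter_not Finset.univ (fun x => θ x = p)
    (fun x => ueUtil u θ x),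
    ← Finset.sum_filter_add_sum_filter_not (Finset.univ.filter (fun x => ¬θ x = p))
    (fun x => θ x = q) (fun x => ueUtil u θ x)]
  have e1 : (Finset.univ.filter (fun x => ¬θ x = p)).filter (fun x => θ x = q) =
      Finset.univ.filter (fun x => θ x = q) := by
    rw [Finset.filter_filter]
    ext x
    simp only [Finset.mem_filter, Finset.mem_univ, true_and]
    exact ⟨fun h => h.2, fun h => ⟨fun hp => hpq (hp ▸ h ▸ rfl), h⟩⟩
  have e2 : (Finset.univ.filter (fun x => ¬θ x = p)).filter (fun x => ¬θ x = q) =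
      Finset.univ.filter (fun x => ¬θ x = p ∧ ¬θ x = q) := by
    rw [Finset.filter_filter]
  rw [e1, e2]
  ring

end Helpers

/-- existence part of Corollary 1: a two-sided pairwise stable
matching exists; in particular, any global maximizer of the social welfare is
two-sided pairwise stable. -/
theorem exists_twoSidedStable {M P : Type*} [Fintype M] [DecidableEq M] [DecidableEq P]
    [Nonempty P]
    (u : M → M → ℝ) (hsymm : ∀ z y, u z y = u y z) (hdiag : ∀ z, u z z = 0) :
    (∃ η : M → P, TwoSidedStable u η) ∧
      ∀ η : M → P, (∀ θ : M → P, welfare u θ ≤ welfare u η) → TwoSidedStable u η := by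
  classical
  -- Part 1: any welfare maximizer is two-sided pairwise stable.
  have key : ∀ η : M → P, (∀ θ : M → P, welfare u θ ≤ welfare u η) → TwoSidedStable u η := by
    intro η hmax
    rintro ⟨m, m', hne, h1, h2, h3, h4, hstrict⟩
    by_cases hpq : η m = η m'
    · -- trivial swap: nothing changes
      have heq : swapMatch η m m' = η := by
        funext z
        unfold swapMatch
        by_cases a : z = m
        · rw [if_pos a, a, hpq]
        · by_cases b : z = m'
          · rw [if_neg a, if_pos b, b, hpq]
          · rw [if_neg a, if_neg b]
      rw [heq] at hstrict
      rcases hstrict with h | h | h | h <;> exact lt_irrefl _ h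
    · -- genuine swap: the welfare strictly increases, contradiction.
      set η' := swapMatch η m m' with hη'
      have I2 : snUtil u η' (η m') =
          snUtil u η (η m') + 2 * (ueUtil u η' m - ueUtil u η m') :=
        snUtil_swap u hsymm hdiag η m m' hne hpq
      have I1 : snUtil u η' (η m) =
          snUtil u η (η m) + 2 * (ueUtil u η' m' - ueUtil u η m) := by
        have h := snUtil_swap u hsymm hdiag η m' m hne.symm (Ne.symm hpq)
        rwa [swapMatch_comm η m' m, ← hη'] at h
      have Wη : welfare u η = snUtil u η (η m) + snUtil u η (η m') +
          ∑ x ∈ Finset.univ.filter (fun x => ¬η x = η m ∧ ¬η x = η m'), ueUtil u η x :=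
        welfare_split u η (η m) (η m') hpq
      have Wη' : welfare u η' = snUtil u η' (η m) + snUtil u η' (η m') +
          ∑ x ∈ Finset.univ.filter (fun x => ¬η' x = η m ∧ ¬η' x = η m'), ueUtil u η' x :=
        welfare_split u η' (η m) (η m') hpq
      have hrestset : Finset.univ.filter (fun x => ¬η' x = η m ∧ ¬η' x = η m') =
          Finset.univ.filter (fun x => ¬η x = η m ∧ ¬η x = η m') := by
        ext x
        simp only [Finset.mem_filter, Finset.mem_univ, true_and]
        by_cases a : x = m
        · rw [a, hη', swapMatch_fst]
          simp [hpq]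
        · by_cases b : x = m'
          · rw [b, hη', swapMatch_snd η m m' hne]
            simp [hpq]
          · rw [hη', swapMatch_other η m m' a b]
      have hrest : ∑ x ∈ Finset.univ.filter (fun x => ¬η' x = η m ∧ ¬η' x = η m'),
          ueUtil u η' x =
          ∑ x ∈ Finset.univ.filter (fun x => ¬η x = η m ∧ ¬η x = η m'), ueUtil u η x := by
        rw [hrestset]
        refine Finset.sum_congr rfl (fun x hx => ?_)
        simp only [Finset.mem_filter, Finset.mem_univ, true_and] at hx
        exact ueUtil_swap_other u η m m' hx.1 hx.2
      have W : welfare u η' - welfare u η =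
          (snUtil u η' (η m) - snUtil u η (η m)) +
          (snUtil u η' (η m') - snUtil u η (η m')) := by
        rw [Wη, Wη', hrest]; ring
      have hlt : welfare u η < welfare u η' := by
        rcases hstrict with h | h | h | h <;> linarith [I1, I2, h1, h2, h3, h4, W]
      exact absurd (hmax η') (not_le.2 hlt)
  -- Part 2: a maximizer exists, since the welfare takes finitely many values.
  have hF : ∀ η : M → P, welfare u η =
      (fun r : M → M → Bool => ∑ x : M, ∑ z : M, if r z x = true then u z x else 0)
        (fun z x => decide (η z = η x)) := by
    intro η
    unfold welfare ueUtil
    refine Finset.sum_congr rfl (fun x _ => ?_)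
    rw [Finset.sum_filter]
    refine Finset.sum_congr rfl (fun z _ => ?_)
    simp
  have hfin : (Set.range (fun η : M → P => welfare u η)).Finite := by
    refine Set.Finite.subset (Set.finite_range
      (fun r : M → M → Bool => ∑ x : M, ∑ z : M, if r z x = true then u z x else 0)) ?_
    rintro _ ⟨η, rfl⟩
    exact ⟨_, (hF η).symm⟩
  have hnon : (Set.range (fun η : M → P => welfare u η)).Nonempty :=
    ⟨welfare u (fun _ => Classical.arbitrary P), ⟨_, rfl⟩⟩
  obtain ⟨a, ha, hamax⟩ : ∃ a ∈ Set.range (fun η : M → P => welfare u η),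
      ∀ b ∈ Set.range (fun η : M → P => welfare u η), id a ≤ id b → id a = id b := by
    obtain ⟨a, ha, h⟩ := hfin.exists_maximal hnon
    exact ⟨a, ha, fun b hb hab => le_antisymm hab (h hb hab)⟩
  obtain ⟨η₀, hη₀⟩ := ha
  have hmax₀ : ∀ θ : M → P, welfare u θ ≤ welfare u η₀ := by
    intro θ
    by_contra hgt
    push_neg at hgt
    rw [show welfare u η₀ = a from hη₀] at hgt
    have h := hamax _ ⟨θ, rfl⟩ (le_of_lt hgt)
    simp only [id] at h
    exact absurd h (ne_of_lt hgt)
  exact ⟨⟨η₀, key η₀ hmax₀⟩, key⟩
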